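/- Let t ≥ 1 and let F_t be the rooted tree whose root c has t children, each the root of a copy of the rooted 3-vertex path L. Then 𝒜_{F_t}(x) = x^{t+1}(2+3x+x^2)^t, ℬ_{F_t}(x) = x^t((1+3x+x^2)^t − (1+x)^t), and 𝒞_{F_t}(x) = x^t(1+x)^t. -/

import Mathlib

open Polynomial

/-- `𝒜_S(x)`: generating polynomial (by cardinality) of subsets `S'` containing the root `ρ`
such that every vertex is in `S'` or adjacent to a member of `S'`. -/
noncomputable def stateA {V : Type*} [Fintype V] (G : SimpleGraph V) (ρ : V) :
    Polynomial ℤ :=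
  ∑ j ∈ Finset.range (Fintype.card V + 1),
    (Nat.card {S : Finset V // S.card = j ∧ ρ ∈ S ∧
      ∀ v, v ∈ S ∨ ∃ u ∈ S, G.Adj u v} : Polynomial ℤ) * Polynomial.X ^ j

/-- `ℬ_S(x)`: generating polynomial of subsets `S'` with `ρ ∉ S'`, `ρ` adjacent to a member
of `S'`, and every vertex other than `ρ` in `S'` or adjacent to a member of `S'`. -/
noncomputable def stateB {V : Type*} [Fintype V] (G : SimpleGraph V) (ρ : V) :
    Polynomial ℤ :=
  ∑ j ∈ Finset.range (Fintype.card V + 1),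
    (Nat.card {S : Finset V // S.card = j ∧ ρ ∉ S ∧ (∃ u ∈ S, G.Adj u ρ) ∧
      ∀ v, v ≠ ρ → (v ∈ S ∨ ∃ u ∈ S, G.Adj u v)} : Polynomial ℤ) * Polynomial.X ^ j

/-- `𝒞_S(x)`: generating polynomial of subsets `S'` with `ρ ∉ S'`, `ρ` not adjacent to any
member of `S'`, and every vertex other than `ρ` in `S'` or adjacent to a member of `S'`. -/
noncomputable def stateC {V : Type*} [Fintype V] (G : SimpleGraph V) (ρ : V) :
    Polynomial ℤ :=
  ∑ j ∈ Finset.range (Fintype.card V + 1),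
    (Nat.card {S : Finset V // S.card = j ∧ ρ ∉ S ∧ (¬ ∃ u ∈ S, G.Adj u ρ) ∧
      ∀ v, v ≠ ρ → (v ∈ S ∨ ∃ u ∈ S, G.Adj u v)} : Polynomial ℤ) * Polynomial.X ^ j

/-- Vertices of the rooted gadget `F_t`: a root together with `t` copies of the rooted
three-vertex path `L`. -/
def FVert (t : ℕ) : Type := Unit ⊕ (Fin t × Fin 3)

instance (t : ℕ) : Fintype (FVert t) := by unfold FVert; infer_instance

/-- Base edge relation of `F_t`: the root is joined to the root (vertex `0`) of each copy of
`L`, and each copy of `L` carries path edges `0-1-2`. -/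
def FRel (t : ℕ) (x y : FVert t) : Prop :=
  (∃ ℓ : Fin t, x = Sum.inl () ∧ y = Sum.inr (ℓ, 0)) ∨
  (∃ (ℓ : Fin t) (a b : Fin 3), (SimpleGraph.pathGraph 3).Adj a b ∧
    x = Sum.inr (ℓ, a) ∧ y = Sum.inr (ℓ, b))

/-- The rooted tree `F_t` (root `Sum.inl ()`). -/
def Ftree (t : ℕ) : SimpleGraph (FVert t) := SimpleGraph.fromRel (FRel t)

/-! ### Auxiliary material -/

open Finset

instance (t : ℕ) : DecidableEq (FVert t) := inferInstanceAs (DecidableEq (Unit ⊕ (Fin t × Fin 3)))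

lemma sum_card_eq {V : Type*} [Fintype V] [DecidableEq V] (P : Finset V → Prop) [DecidablePred P] :
    ∑ j ∈ Finset.range (Fintype.card V + 1),
      ((Nat.card {S : Finset V // S.card = j ∧ P S} : Polynomial ℤ)) * X ^ j
    = ∑ S ∈ Finset.univ.filter P, (X : Polynomial ℤ) ^ S.card := by
  rw [← Finset.sum_fiberwise_of_maps_to (g := fun S : Finset V => S.card)
      (t := Finset.range (Fintype.card V + 1)) (fun S _ => by
        simp only [Finset.mem_range, Nat.lt_succ_iff]
        exact (Finset.card_le_univ S).trans_eq (Finset.card_univ))]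
  refine Finset.sum_congr rfl fun j _ => ?_
  have h1 : Nat.card {S : Finset V // S.card = j ∧ P S}
      = ((Finset.univ.filter P).filter (fun S => S.card = j)).card := by
    rw [Nat.card_eq_fintype_card, Fintype.card_subtype]
    congr 1
    ext S
    simp [and_comm]
  rw [h1]
  have h2 : ∑ S ∈ (Finset.univ.filter P).filter (fun S => S.card = j), (X:Polynomial ℤ)^S.card
      = ∑ _S ∈ (Finset.univ.filter P).filter (fun S => S.card = j), (X:Polynomial ℤ)^j :=
    Finset.sum_congr rfl fun S hS => by rw [(Finset.mem_filter.mp hS).2]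
  rw [h2, Finset.sum_const, nsmul_eq_mul]

lemma path3_adj (a b : Fin 3) : (SimpleGraph.pathGraph 3).Adj a b ↔
    (a = 0 ∧ b = 1) ∨ (a = 1 ∧ b = 0) ∨ (a = 1 ∧ b = 2) ∨ (a = 2 ∧ b = 1) := by
  rw [SimpleGraph.pathGraph_adj]
  fin_cases a <;> fin_cases b <;> simp

lemma ftree_adj (t : ℕ) (x y : FVert t) : (Ftree t).Adj x y ↔
    (∃ ℓ : Fin t, (x = Sum.inl () ∧ y = Sum.inr (ℓ, 0)) ∨ (y = Sum.inl () ∧ x = Sum.inr (ℓ, 0))) ∨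
    (∃ (ℓ : Fin t) (a b : Fin 3), (SimpleGraph.pathGraph 3).Adj a b ∧
      x = Sum.inr (ℓ, a) ∧ y = Sum.inr (ℓ, b)) := by
  rw [Ftree, SimpleGraph.fromRel_adj]
  constructor
  · rintro ⟨hne, h | h⟩
    · rcases h with (⟨ℓ, h1, h2⟩ | ⟨ℓ, a, b, hab, h1, h2⟩)
      · exact Or.inl ⟨ℓ, Or.inl ⟨h1, h2⟩⟩
      · exact Or.inr ⟨ℓ, a, b, hab, h1, h2⟩
    · rcases h with (⟨ℓ, h1, h2⟩ | ⟨ℓ, a, b, hab, h1, h2⟩)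
      · exact Or.inl ⟨ℓ, Or.inr ⟨h1, h2⟩⟩
      · exact Or.inr ⟨ℓ, b, a, hab.symm, h2, h1⟩
  · rintro (⟨ℓ, (⟨h1, h2⟩ | ⟨h1, h2⟩)⟩ | ⟨ℓ, a, b, hab, h1, h2⟩)
    · exact ⟨by simp [h1, h2]; exact Sum.inl_ne_inr, Or.inl (Or.inl ⟨ℓ, h1, h2⟩)⟩
    · exact ⟨by simp [h1, h2]; exact Sum.inr_ne_inl, Or.inr (Or.inl ⟨ℓ, h1, h2⟩)⟩
    · refine ⟨?_, Or.inl (Or.inr ⟨ℓ, a, b, hab, h1, h2⟩)⟩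
      rw [h1, h2]
      intro h
      have h2 : (ℓ,a) = (ℓ,b) := Sum.inr.inj h
      exact hab.ne (congrArg Prod.snd h2)

section
variable {t : ℕ} (S : Finset (FVert t))

lemma inrinj {t : ℕ} {ℓ m : Fin t} {a b : Fin 3} :
    (Sum.inr (ℓ,a) : FVert t) = Sum.inr (m,b) ↔ ℓ = m ∧ a = b := by
  constructor
  · intro h
    have h2 : (ℓ,a) = (m,b) := Sum.inr.inj h
    exact ⟨congrArg Prod.fst h2, congrArg Prod.snd h2⟩
  · rintro ⟨rfl, rfl⟩; rfl

lemma inlnenr {t : ℕ} {ℓ : Fin t} {a : Fin 3} : (Sum.inl () : FVert t) ≠ Sum.inr (ℓ,a) := by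
  intro h; exact Sum.inl_ne_inr h

lemma dom_root : (∃ u ∈ S, (Ftree t).Adj u (Sum.inl ())) ↔ ∃ ℓ, Sum.inr (ℓ, 0) ∈ S := by
  constructor
  · rintro ⟨u, hu, hadj⟩
    replace hadj := (ftree_adj t _ _).mp hadj
    rcases hadj with ⟨ℓ, (⟨h1, h2⟩ | ⟨h1, h2⟩)⟩ | ⟨ℓ, a, b, hab, h1, h2⟩
    · exact absurd h2 inlnenr
    · exact ⟨ℓ, h2 ▸ hu⟩
    · exact absurd h2 inlnenr
  · rintro ⟨ℓ, hℓ⟩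
    exact ⟨Sum.inr (ℓ, 0), hℓ, (ftree_adj t _ _).mpr (Or.inl ⟨ℓ, Or.inr ⟨rfl, rfl⟩⟩)⟩

lemma dom0 (ℓ : Fin t) : (∃ u ∈ S, (Ftree t).Adj u (Sum.inr (ℓ, 0))) ↔
    (Sum.inl () ∈ S ∨ Sum.inr (ℓ, 1) ∈ S) := by
  constructor
  · rintro ⟨u, hu, hadj⟩
    replace hadj := (ftree_adj t _ _).mp hadj
    rcases hadj with ⟨m, (⟨h1, h2⟩ | ⟨h1, h2⟩)⟩ | ⟨m, a, b, hab, h1, h2⟩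
    · exact Or.inl (h1 ▸ hu)
    · exact absurd h1.symm inlnenr
    · obtain ⟨hm, hb⟩ := inrinj.mp h2
      subst hm; subst hb
      rw [path3_adj] at hab
      rcases hab with ⟨rfl, h⟩ | ⟨rfl, h⟩ | ⟨rfl, h⟩ | ⟨rfl, h⟩ <;>
        first
          | exact absurd h (by decide)
          | exact Or.inr (h1 ▸ hu)
  · rintro (h | h)
    · exact ⟨_, h, (ftree_adj t _ _).mpr (Or.inl ⟨ℓ, Or.inl ⟨rfl, rfl⟩⟩)⟩
    · exact ⟨_, h, (ftree_adj t _ _).mpr (Or.inr ⟨ℓ, 1, 0, by rw [path3_adj]; tauto, rfl, rfl⟩)⟩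

lemma dom1 (ℓ : Fin t) : (∃ u ∈ S, (Ftree t).Adj u (Sum.inr (ℓ, 1))) ↔
    (Sum.inr (ℓ, 0) ∈ S ∨ Sum.inr (ℓ, 2) ∈ S) := by
  constructor
  · rintro ⟨u, hu, hadj⟩
    replace hadj := (ftree_adj t _ _).mp hadj
    rcases hadj with ⟨m, (⟨h1, h2⟩ | ⟨h1, h2⟩)⟩ | ⟨m, a, b, hab, h1, h2⟩
    · exact absurd ((inrinj.mp h2).2.symm) (by decide)
    · exact absurd h1.symm inlnenr
    · obtain ⟨hm, hb⟩ := inrinj.mp h2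
      subst hm; subst hb
      rw [path3_adj] at hab
      rcases hab with ⟨rfl, h⟩ | ⟨rfl, h⟩ | ⟨rfl, h⟩ | ⟨rfl, h⟩ <;>
        first
          | exact absurd h (by decide)
          | exact Or.inl (h1 ▸ hu)
          | exact Or.inr (h1 ▸ hu)
  · rintro (h | h)
    · exact ⟨_, h, (ftree_adj t _ _).mpr (Or.inr ⟨ℓ, 0, 1, by rw [path3_adj]; tauto, rfl, rfl⟩)⟩
    · exact ⟨_, h, (ftree_adj t _ _).mpr (Or.inr ⟨ℓ, 2, 1, by rw [path3_adj]; tauto, rfl, rfl⟩)⟩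

lemma dom2 (ℓ : Fin t) : (∃ u ∈ S, (Ftree t).Adj u (Sum.inr (ℓ, 2))) ↔
    Sum.inr (ℓ, 1) ∈ S := by
  constructor
  · rintro ⟨u, hu, hadj⟩
    replace hadj := (ftree_adj t _ _).mp hadj
    rcases hadj with ⟨m, (⟨h1, h2⟩ | ⟨h1, h2⟩)⟩ | ⟨m, a, b, hab, h1, h2⟩
    · exact absurd ((inrinj.mp h2).2.symm) (by decide)
    · exact absurd h1.symm inlnenr
    · obtain ⟨hm, hb⟩ := inrinj.mp h2
      subst hm; subst hb
      rw [path3_adj] at hab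
      rcases hab with ⟨rfl, h⟩ | ⟨rfl, h⟩ | ⟨rfl, h⟩ | ⟨rfl, h⟩ <;>
        first
          | exact absurd h (by decide)
          | exact h1 ▸ hu
  · intro h
    exact ⟨_, h, (ftree_adj t _ _).mpr (Or.inr ⟨ℓ, 1, 2, by rw [path3_adj]; tauto, rfl, rfl⟩)⟩

end

section
variable {t : ℕ}

instance memDecFV {t : ℕ} (S : Finset (FVert t)) (x : Unit ⊕ Fin t × Fin 3) : Decidable (x ∈ S) := by
  unfold FVert at *; infer_instance

def Fslice (S : Finset (FVert t)) (ℓ : Fin t) : Finset (Fin 3) :=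
  univ.filter (fun a => Sum.inr (ℓ, a) ∈ S)

def ofPair (b : Bool) (f : Fin t → Finset (Fin 3)) : Finset (FVert t) :=
  (if b then {Sum.inl ()} else ∅) ∪
    univ.biUnion (fun ℓ => (f ℓ).image (fun a => Sum.inr (ℓ, a)))

lemma mem_ofPair_inl (b : Bool) (f : Fin t → Finset (Fin 3)) :
    (Sum.inl () ∈ ofPair b f) ↔ b = true := by
  unfold ofPair
  refine Finset.mem_union.trans ?_
  cases b
  · refine iff_of_false ?_ (by simp)
    rintro (h | h)
    · exact Finset.notMem_empty _ h
    · obtain ⟨ℓ, _, h⟩ := Finset.mem_biUnion.mp h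
      obtain ⟨a, _, h⟩ := Finset.mem_image.mp h
      exact Sum.inr_ne_inl h
  · exact iff_of_true (Or.inl (Finset.mem_singleton_self _)) rfl

lemma mem_ofPair_inr (b : Bool) (f : Fin t → Finset (Fin 3)) (ℓ : Fin t) (a : Fin 3) :
    (Sum.inr (ℓ, a) ∈ ofPair b f) ↔ a ∈ f ℓ := by
  unfold ofPair
  refine Finset.mem_union.trans ?_
  constructor
  · rintro (h | h)
    · exfalso; cases b
      · exact Finset.notMem_empty _ h
      · exact Sum.inr_ne_inl (Finset.mem_singleton.mp h)
    · obtain ⟨m, -, h⟩ := Finset.mem_biUnion.mp h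
      obtain ⟨c, hc, h⟩ := Finset.mem_image.mp h
      obtain ⟨rfl, rfl⟩ : m = ℓ ∧ c = a := by
        have h2 : (m, c) = (ℓ, a) := Sum.inr.inj h
        exact ⟨congrArg Prod.fst h2, congrArg Prod.snd h2⟩
      exact hc
  · intro h
    refine Or.inr ?_
    exact Finset.mem_biUnion.mpr ⟨ℓ, Finset.mem_univ _, Finset.mem_image.mpr ⟨a, h, rfl⟩⟩

lemma card_ofPair (b : Bool) (f : Fin t → Finset (Fin 3)) :
    (ofPair b f).card = (if b then 1 else 0) + ∑ ℓ, (f ℓ).card := by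
  rw [ofPair, Finset.card_union_of_disjoint, Finset.card_biUnion]
  · congr 1
    · cases b <;> simp <;> exact Finset.card_singleton _
    · exact Finset.sum_congr rfl fun ℓ _ =>
        Finset.card_image_of_injective _ (fun a c h => (Prod.mk.injEq _ _ _ _ ▸ Sum.inr.inj h).2)
  · intro ℓ _ m _ hlm
    refine Finset.disjoint_left.mpr ?_
    intro x hx hx'
    obtain ⟨a, _, rfl⟩ := Finset.mem_image.mp hx
    obtain ⟨c, _, h⟩ := Finset.mem_image.mp hx'
    exact hlm (congrArg Prod.fst (Sum.inr.inj h)).symm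
  · simp only [Finset.disjoint_left]
    intro x hx h2
    obtain ⟨ℓ, _, h2⟩ := Finset.mem_biUnion.mp h2
    obtain ⟨a, _, rfl⟩ := Finset.mem_image.mp h2
    cases b
    · exact Finset.notMem_empty _ hx
    · exact Sum.inr_ne_inl (Finset.mem_singleton.mp hx)

def pairEquiv (t : ℕ) : (Bool × (Fin t → Finset (Fin 3))) ≃ Finset (FVert t) where
  toFun p := ofPair p.1 p.2
  invFun S := (decide (Sum.inl () ∈ S), Fslice S)
  left_inv p := by
    obtain ⟨b, f⟩ := p
    refine Prod.ext ?_ ?_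
    · simp only [mem_ofPair_inl]
      cases b <;> simp
    · funext ℓ
      ext a
      simp [Fslice, mem_ofPair_inr]
  right_inv S := by
    ext x
    match x with
    | Sum.inl () => exact (mem_ofPair_inl _ _).trans decide_eq_true_iff
    | Sum.inr (ℓ, a) => exact (mem_ofPair_inr _ _ _ _).trans (by unfold Fslice; exact Finset.mem_filter.trans (and_iff_right (Finset.mem_univ _)))

/-! ### Local predicates -/

def locA (T : Finset (Fin 3)) : Prop := (1 ∈ T ∨ 0 ∈ T ∨ 2 ∈ T) ∧ (2 ∈ T ∨ 1 ∈ T)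

def locB (T : Finset (Fin 3)) : Prop :=
  (0 ∈ T ∨ 1 ∈ T) ∧ (1 ∈ T ∨ 0 ∈ T ∨ 2 ∈ T) ∧ (2 ∈ T ∨ 1 ∈ T)

def locC (T : Finset (Fin 3)) : Prop := 0 ∉ T ∧ locB T

instance : DecidablePred locA := fun T => by unfold locA; infer_instance
instance : DecidablePred locB := fun T => by unfold locB; infer_instance
instance : DecidablePred locC := fun T => by unfold locC locB; infer_instance

lemma predA (b : Bool) (f : Fin t → Finset (Fin 3)) :
    (Sum.inl () ∈ ofPair b f ∧
      ∀ v, v ∈ ofPair b f ∨ ∃ u ∈ ofPair b f, (Ftree t).Adj u v) ↔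
    (b = true ∧ ∀ ℓ, locA (f ℓ)) := by
  constructor
  · rintro ⟨hroot, hdom⟩
    refine ⟨(mem_ofPair_inl b f).mp hroot, fun ℓ => ?_⟩
    constructor
    · rcases hdom (Sum.inr (ℓ, 1)) with h | h
      · exact Or.inl ((mem_ofPair_inr b f ℓ 1).mp h)
      · rcases (dom1 _ ℓ).mp h with h | h
        · exact Or.inr (Or.inl ((mem_ofPair_inr b f ℓ 0).mp h))
        · exact Or.inr (Or.inr ((mem_ofPair_inr b f ℓ 2).mp h))
    · rcases hdom (Sum.inr (ℓ, 2)) with h | h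
      · exact Or.inl ((mem_ofPair_inr b f ℓ 2).mp h)
      · exact Or.inr ((mem_ofPair_inr b f ℓ 1).mp ((dom2 _ ℓ).mp h))
  · rintro ⟨hb, hloc⟩
    have hroot : Sum.inl () ∈ ofPair b f := (mem_ofPair_inl b f).mpr hb
    refine ⟨hroot, fun v => ?_⟩
    match v with
    | Sum.inl () => exact Or.inl hroot
    | Sum.inr (ℓ, a) =>
      obtain ⟨h1, h2⟩ := hloc ℓ
      fin_cases a
      · exact Or.inr ((dom0 _ ℓ).mpr (Or.inl hroot))
      · rcases h1 with h | h | h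
        · exact Or.inl ((mem_ofPair_inr b f ℓ 1).mpr h)
        · exact Or.inr ((dom1 _ ℓ).mpr (Or.inl ((mem_ofPair_inr b f ℓ 0).mpr h)))
        · exact Or.inr ((dom1 _ ℓ).mpr (Or.inr ((mem_ofPair_inr b f ℓ 2).mpr h)))
      · rcases h2 with h | h
        · exact Or.inl ((mem_ofPair_inr b f ℓ 2).mpr h)
        · exact Or.inr ((dom2 _ ℓ).mpr ((mem_ofPair_inr b f ℓ 1).mpr h))

lemma predDom (b : Bool) (f : Fin t → Finset (Fin 3)) (hb : b = false) :
    (∀ v, v ≠ Sum.inl () → (v ∈ ofPair b f ∨ ∃ u ∈ ofPair b f, (Ftree t).Adj u v)) ↔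
    ∀ ℓ, locB (f ℓ) := by
  subst hb
  have hroot : Sum.inl () ∉ ofPair false f := by
    rw [mem_ofPair_inl]; simp
  constructor
  · intro hdom ℓ
    refine ⟨?_, ?_, ?_⟩
    · rcases hdom (Sum.inr (ℓ, 0)) inlnenr.symm with h | h
      · exact Or.inl ((mem_ofPair_inr _ f ℓ 0).mp h)
      · rcases (dom0 _ ℓ).mp h with h | h
        · exact absurd h hroot
        · exact Or.inr ((mem_ofPair_inr _ f ℓ 1).mp h)
    · rcases hdom (Sum.inr (ℓ, 1)) inlnenr.symm with h | h
      · exact Or.inl ((mem_ofPair_inr _ f ℓ 1).mp h)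
      · rcases (dom1 _ ℓ).mp h with h | h
        · exact Or.inr (Or.inl ((mem_ofPair_inr _ f ℓ 0).mp h))
        · exact Or.inr (Or.inr ((mem_ofPair_inr _ f ℓ 2).mp h))
    · rcases hdom (Sum.inr (ℓ, 2)) inlnenr.symm with h | h
      · exact Or.inl ((mem_ofPair_inr _ f ℓ 2).mp h)
      · exact Or.inr ((mem_ofPair_inr _ f ℓ 1).mp ((dom2 _ ℓ).mp h))
  · intro hloc v hv
    match v with
    | Sum.inl () => exact absurd rfl hv
    | Sum.inr (ℓ, a) =>
      obtain ⟨h0, h1, h2⟩ := hloc ℓ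
      fin_cases a
      · rcases h0 with h | h
        · exact Or.inl ((mem_ofPair_inr _ f ℓ 0).mpr h)
        · exact Or.inr ((dom0 _ ℓ).mpr (Or.inr ((mem_ofPair_inr _ f ℓ 1).mpr h)))
      · rcases h1 with h | h | h
        · exact Or.inl ((mem_ofPair_inr _ f ℓ 1).mpr h)
        · exact Or.inr ((dom1 _ ℓ).mpr (Or.inl ((mem_ofPair_inr _ f ℓ 0).mpr h)))
        · exact Or.inr ((dom1 _ ℓ).mpr (Or.inr ((mem_ofPair_inr _ f ℓ 2).mpr h)))
      · rcases h2 with h | h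
        · exact Or.inl ((mem_ofPair_inr _ f ℓ 2).mpr h)
        · exact Or.inr ((dom2 _ ℓ).mpr ((mem_ofPair_inr _ f ℓ 1).mpr h))

lemma predB (b : Bool) (f : Fin t → Finset (Fin 3)) :
    (Sum.inl () ∉ ofPair b f ∧ (∃ u ∈ ofPair b f, (Ftree t).Adj u (Sum.inl ())) ∧
      ∀ v, v ≠ Sum.inl () → (v ∈ ofPair b f ∨ ∃ u ∈ ofPair b f, (Ftree t).Adj u v)) ↔
    (b = false ∧ (∃ ℓ, 0 ∈ f ℓ) ∧ ∀ ℓ, locB (f ℓ)) := by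
  constructor
  · rintro ⟨hroot, hadj, hdom⟩
    have hb : b = false := by
      cases b
      · rfl
      · exact absurd ((mem_ofPair_inl true f).mpr rfl) hroot
    refine ⟨hb, ?_, (predDom b f hb).mp hdom⟩
    obtain ⟨ℓ, hℓ⟩ := (dom_root _).mp hadj
    exact ⟨ℓ, (mem_ofPair_inr b f ℓ 0).mp hℓ⟩
  · rintro ⟨hb, ⟨ℓ, hℓ⟩, hloc⟩
    subst hb
    refine ⟨by rw [mem_ofPair_inl]; simp, ?_, (predDom false f rfl).mpr hloc⟩
    exact (dom_root _).mpr ⟨ℓ, (mem_ofPair_inr false f ℓ 0).mpr hℓ⟩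

lemma predC (b : Bool) (f : Fin t → Finset (Fin 3)) :
    (Sum.inl () ∉ ofPair b f ∧ (¬ ∃ u ∈ ofPair b f, (Ftree t).Adj u (Sum.inl ())) ∧
      ∀ v, v ≠ Sum.inl () → (v ∈ ofPair b f ∨ ∃ u ∈ ofPair b f, (Ftree t).Adj u v)) ↔
    (b = false ∧ ∀ ℓ, locC (f ℓ)) := by
  rw [dom_root]
  constructor
  · rintro ⟨hroot, hadj, hdom⟩
    have hb : b = false := by
      cases b
      · rfl
      · exact absurd ((mem_ofPair_inl true f).mpr rfl) hroot
    refine ⟨hb, fun ℓ => ⟨?_, (predDom b f hb).mp hdom ℓ⟩⟩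
    intro h0
    exact hadj ⟨ℓ, (mem_ofPair_inr b f ℓ 0).mpr h0⟩
  · rintro ⟨hb, hloc⟩
    subst hb
    refine ⟨by rw [mem_ofPair_inl]; simp, ?_, (predDom false f rfl).mpr (fun ℓ => (hloc ℓ).2)⟩
    rintro ⟨ℓ, hℓ⟩
    exact (hloc ℓ).1 ((mem_ofPair_inr false f ℓ 0).mp hℓ)

end

/-! ### Summation machinery -/

section
variable {t : ℕ}

lemma prod_ite_all (q : Finset (Fin 3) → Prop) [DecidablePred q]
    (w : Finset (Fin 3) → Polynomial ℤ) (f : Fin t → Finset (Fin 3)) :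
    (∏ ℓ, if q (f ℓ) then w (f ℓ) else 0)
      = if (∀ ℓ, q (f ℓ)) then ∏ ℓ, w (f ℓ) else 0 := by
  by_cases h : ∀ ℓ, q (f ℓ)
  · rw [if_pos h]
    exact Finset.prod_congr rfl fun ℓ _ => if_pos (h ℓ)
  · rw [if_neg h]
    push_neg at h
    obtain ⟨ℓ, hℓ⟩ := h
    exact Finset.prod_eq_zero (Finset.mem_univ ℓ) (if_neg hℓ)

lemma key (q : Finset (Fin 3) → Prop) [DecidablePred q] :
    (∑ f : Fin t → Finset (Fin 3),
        if (∀ ℓ, q (f ℓ)) then (X : Polynomial ℤ) ^ (∑ ℓ, (f ℓ).card) else 0)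
      = (∑ T : Finset (Fin 3), if q T then (X : Polynomial ℤ) ^ T.card else 0) ^ t := by
  have h1 : ((∑ T : Finset (Fin 3), if q T then (X : Polynomial ℤ) ^ T.card else 0) ^ t)
      = ∏ _ℓ : Fin t, (∑ T : Finset (Fin 3), if q T then (X : Polynomial ℤ) ^ T.card else 0) := by
    rw [Finset.prod_const, Finset.card_univ, Fintype.card_fin]
  rw [h1, Finset.prod_univ_sum, Fintype.piFinset_univ]
  refine Finset.sum_congr rfl fun f _ => ?_
  rw [prod_ite_all q (fun T => (X : Polynomial ℤ) ^ T.card) f,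
    Finset.prod_pow_eq_pow_sum]

lemma enumA : ∑ T : Finset (Fin 3), (if locA T then (X : Polynomial ℤ) ^ T.card else 0)
    = 2*X + 3*X^2 + X^3 := by
  rw [show (Finset.univ : Finset (Finset (Fin 3)))
      = {∅, {0}, {1}, {2}, {0,1}, {0,2}, {1,2}, {0,1,2}} from by decide]
  rw [Finset.sum_insert (by decide), Finset.sum_insert (by decide), Finset.sum_insert (by decide),
    Finset.sum_insert (by decide), Finset.sum_insert (by decide), Finset.sum_insert (by decide),
    Finset.sum_insert (by decide), Finset.sum_singleton]
  rw [if_neg (by decide), if_neg (by decide), if_pos (by decide), if_pos (by decide),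
    if_pos (by decide), if_pos (by decide), if_pos (by decide), if_pos (by decide)]
  rw [show #({1} : Finset (Fin 3)) = 1 from by decide, show #({2} : Finset (Fin 3)) = 1 from by decide,
    show #({0,1} : Finset (Fin 3)) = 2 from by decide, show #({0,2} : Finset (Fin 3)) = 2 from by decide,
    show #({1,2} : Finset (Fin 3)) = 2 from by decide, show #({0,1,2} : Finset (Fin 3)) = 3 from by decide]
  ring

lemma enumB : ∑ T : Finset (Fin 3), (if locB T then (X : Polynomial ℤ) ^ T.card else 0)
    = X + 3*X^2 + X^3 := by
  rw [show (Finset.univ : Finset (Finset (Fin 3)))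
      = {∅, {0}, {1}, {2}, {0,1}, {0,2}, {1,2}, {0,1,2}} from by decide]
  rw [Finset.sum_insert (by decide), Finset.sum_insert (by decide), Finset.sum_insert (by decide),
    Finset.sum_insert (by decide), Finset.sum_insert (by decide), Finset.sum_insert (by decide),
    Finset.sum_insert (by decide), Finset.sum_singleton]
  rw [if_neg (by decide), if_neg (by decide), if_pos (by decide), if_neg (by decide),
    if_pos (by decide), if_pos (by decide), if_pos (by decide), if_pos (by decide)]
  rw [show #({1} : Finset (Fin 3)) = 1 from by decide,
    show #({0,1} : Finset (Fin 3)) = 2 from by decide, show #({0,2} : Finset (Fin 3)) = 2 from by decide,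
    show #({1,2} : Finset (Fin 3)) = 2 from by decide, show #({0,1,2} : Finset (Fin 3)) = 3 from by decide]
  ring

lemma enumC : ∑ T : Finset (Fin 3), (if locC T then (X : Polynomial ℤ) ^ T.card else 0)
    = X + X^2 := by
  rw [show (Finset.univ : Finset (Finset (Fin 3)))
      = {∅, {0}, {1}, {2}, {0,1}, {0,2}, {1,2}, {0,1,2}} from by decide]
  rw [Finset.sum_insert (by decide), Finset.sum_insert (by decide), Finset.sum_insert (by decide),
    Finset.sum_insert (by decide), Finset.sum_insert (by decide), Finset.sum_insert (by decide),
    Finset.sum_insert (by decide), Finset.sum_singleton]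
  rw [if_neg (by decide), if_neg (by decide), if_pos (by decide), if_neg (by decide),
    if_neg (by decide), if_neg (by decide), if_pos (by decide), if_neg (by decide)]
  rw [show #({1} : Finset (Fin 3)) = 1 from by decide,
    show #({1,2} : Finset (Fin 3)) = 2 from by decide]
  ring

lemma state_sum (P : Finset (FVert t) → Prop) [DecidablePred P] :
    (∑ j ∈ Finset.range (Fintype.card (FVert t) + 1),
        (Nat.card {S : Finset (FVert t) // S.card = j ∧ P S} : Polynomial ℤ) * X ^ j)
      = ∑ b : Bool, ∑ f : Fin t → Finset (Fin 3),
          (if P (ofPair b f) then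
            (X : Polynomial ℤ) ^ ((if b then 1 else 0) + ∑ ℓ, (f ℓ).card) else 0) := by
  rw [sum_card_eq P, Finset.sum_filter,
    ← Equiv.sum_comp (pairEquiv t) (fun S => if P S then (X : Polynomial ℤ) ^ S.card else 0),
    Fintype.sum_prod_type]
  exact Finset.sum_congr rfl fun b _ => Finset.sum_congr rfl fun f _ => by
    rw [show (pairEquiv t) (b, f) = ofPair b f from rfl, card_ofPair]

end

section
variable {t : ℕ}

lemma ite_subB (f : Fin t → Finset (Fin 3)) (w : Polynomial ℤ) :
    (if ((∃ ℓ, 0 ∈ f ℓ) ∧ ∀ ℓ, locB (f ℓ)) then w else 0)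
      = (if (∀ ℓ, locB (f ℓ)) then w else 0) - (if (∀ ℓ, locC (f ℓ)) then w else 0) := by
  classical
  by_cases hB : ∀ ℓ, locB (f ℓ)
  · by_cases hE : ∃ ℓ, 0 ∈ f ℓ
    · rw [if_pos ⟨hE, hB⟩, if_pos hB, if_neg, sub_zero]
      intro hC
      obtain ⟨ℓ, h0⟩ := hE
      exact (hC ℓ).1 h0
    · rw [if_neg (fun h => hE h.1), if_pos hB, if_pos, sub_self]
      push_neg at hE
      exact fun ℓ => ⟨hE ℓ, hB ℓ⟩
  · rw [if_neg (fun h => hB h.2), if_neg hB, if_neg (fun hC => hB fun ℓ => (hC ℓ).2), sub_self]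

end


/-- For the rooted tree `F_t` (a root with `t` children, each the root of a copy of `L`):
`𝒜 = x^{t+1}(2+3x+x^2)^t`, `ℬ = x^t((1+3x+x^2)^t - (1+x)^t)` and `𝒞 = x^t(1+x)^t`. -/
theorem state_polys_Ftree (t : ℕ) (ht : 1 ≤ t) :
    stateA (Ftree t) (Sum.inl ()) = X ^ (t + 1) * (2 + 3 * X + X ^ 2) ^ t ∧
    stateB (Ftree t) (Sum.inl ()) =
      X ^ t * ((1 + 3 * X + X ^ 2) ^ t - (1 + X) ^ t) ∧
    stateC (Ftree t) (Sum.inl ()) = X ^ t * (1 + X) ^ t := by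
  classical
  refine ⟨?_, ?_, ?_⟩
  · -- state A
    have h1 : stateA (Ftree t) (Sum.inl ())
        = ∑ b : Bool, ∑ f : Fin t → Finset (Fin 3),
            (if (b = true ∧ ∀ ℓ, locA (f ℓ)) then
              (X : Polynomial ℤ) ^ ((if b then 1 else 0) + ∑ ℓ, (f ℓ).card) else 0) := by
      refine Eq.trans (state_sum (t := t)
        (fun S => Sum.inl () ∈ S ∧ ∀ v, v ∈ S ∨ ∃ u ∈ S, (Ftree t).Adj u v)) ?_
      exact Finset.sum_congr rfl fun b _ => Finset.sum_congr rfl fun f _ =>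
        if_congr (predA b f) rfl rfl
    rw [h1, Fintype.sum_bool]
    have h2 : (∑ f : Fin t → Finset (Fin 3),
        (if (false = true ∧ ∀ ℓ, locA (f ℓ)) then
          (X : Polynomial ℤ) ^ ((if false then 1 else 0) + ∑ ℓ, (f ℓ).card) else 0)) = 0 :=
      Finset.sum_eq_zero fun f _ => if_neg (by simp)
    rw [h2, add_zero]
    have h3 : (∑ f : Fin t → Finset (Fin 3),
        (if (true = true ∧ ∀ ℓ, locA (f ℓ)) then
          (X : Polynomial ℤ) ^ ((if true then 1 else 0) + ∑ ℓ, (f ℓ).card) else 0))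
        = X * ∑ f : Fin t → Finset (Fin 3),
            (if (∀ ℓ, locA (f ℓ)) then (X : Polynomial ℤ) ^ (∑ ℓ, (f ℓ).card) else 0) := by
      rw [Finset.mul_sum]
      refine Finset.sum_congr rfl fun f _ => ?_
      rw [mul_ite, mul_zero]
      exact if_congr (by simp) (by rw [if_pos rfl, pow_add, pow_one]) rfl
    rw [h3, key locA, enumA]
    rw [show (2*X + 3*X^2 + X^3 : Polynomial ℤ) = X * (2 + 3*X + X^2) from by ring,
      mul_pow, pow_succ]
    ring
  · -- state B
    have h1 : stateB (Ftree t) (Sum.inl ())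
        = ∑ b : Bool, ∑ f : Fin t → Finset (Fin 3),
            (if (b = false ∧ (∃ ℓ, 0 ∈ f ℓ) ∧ ∀ ℓ, locB (f ℓ)) then
              (X : Polynomial ℤ) ^ ((if b then 1 else 0) + ∑ ℓ, (f ℓ).card) else 0) := by
      refine Eq.trans (state_sum (t := t)
        (fun S => Sum.inl () ∉ S ∧ (∃ u ∈ S, (Ftree t).Adj u (Sum.inl ())) ∧
          ∀ v, v ≠ Sum.inl () → (v ∈ S ∨ ∃ u ∈ S, (Ftree t).Adj u v))) ?_
      exact Finset.sum_congr rfl fun b _ => Finset.sum_congr rfl fun f _ =>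
        if_congr (predB b f) rfl rfl
    rw [h1, Fintype.sum_bool]
    have h2 : (∑ f : Fin t → Finset (Fin 3),
        (if (true = false ∧ (∃ ℓ, 0 ∈ f ℓ) ∧ ∀ ℓ, locB (f ℓ)) then
          (X : Polynomial ℤ) ^ ((if true then 1 else 0) + ∑ ℓ, (f ℓ).card) else 0)) = 0 :=
      Finset.sum_eq_zero fun f _ => if_neg (by simp)
    rw [h2, zero_add]
    have h3 : (∑ f : Fin t → Finset (Fin 3),
        (if (false = false ∧ (∃ ℓ, 0 ∈ f ℓ) ∧ ∀ ℓ, locB (f ℓ)) then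
          (X : Polynomial ℤ) ^ ((if false then 1 else 0) + ∑ ℓ, (f ℓ).card) else 0))
        = (∑ f : Fin t → Finset (Fin 3),
            (if (∀ ℓ, locB (f ℓ)) then (X : Polynomial ℤ) ^ (∑ ℓ, (f ℓ).card) else 0))
          - (∑ f : Fin t → Finset (Fin 3),
            (if (∀ ℓ, locC (f ℓ)) then (X : Polynomial ℤ) ^ (∑ ℓ, (f ℓ).card) else 0)) := by
      rw [← Finset.sum_sub_distrib]
      refine Finset.sum_congr rfl fun f _ => ?_
      rw [show ((if false then 1 else 0) + ∑ ℓ, (f ℓ).card) = ∑ ℓ, (f ℓ).card from by simp,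
        ← ite_subB]
      exact if_congr (by simp) rfl rfl
    rw [h3, key locB, key locC, enumB, enumC]
    rw [show (X + 3*X^2 + X^3 : Polynomial ℤ) = X * (1 + 3*X + X^2) from by ring,
      show (X + X^2 : Polynomial ℤ) = X * (1 + X) from by ring, mul_pow, mul_pow]
    ring
  · -- state C
    have h1 : stateC (Ftree t) (Sum.inl ())
        = ∑ b : Bool, ∑ f : Fin t → Finset (Fin 3),
            (if (b = false ∧ ∀ ℓ, locC (f ℓ)) then
              (X : Polynomial ℤ) ^ ((if b then 1 else 0) + ∑ ℓ, (f ℓ).card) else 0) := by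
      refine Eq.trans (state_sum (t := t)
        (fun S => Sum.inl () ∉ S ∧ (¬ ∃ u ∈ S, (Ftree t).Adj u (Sum.inl ())) ∧
          ∀ v, v ≠ Sum.inl () → (v ∈ S ∨ ∃ u ∈ S, (Ftree t).Adj u v))) ?_
      exact Finset.sum_congr rfl fun b _ => Finset.sum_congr rfl fun f _ =>
        if_congr (predC b f) rfl rfl
    rw [h1, Fintype.sum_bool]
    have h2 : (∑ f : Fin t → Finset (Fin 3),
        (if (true = false ∧ ∀ ℓ, locC (f ℓ)) then
          (X : Polynomial ℤ) ^ ((if true then 1 else 0) + ∑ ℓ, (f ℓ).card) else 0)) = 0 :=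
      Finset.sum_eq_zero fun f _ => if_neg (by simp)
    rw [h2, zero_add]
    have h3 : (∑ f : Fin t → Finset (Fin 3),
        (if (false = false ∧ ∀ ℓ, locC (f ℓ)) then
          (X : Polynomial ℤ) ^ ((if false then 1 else 0) + ∑ ℓ, (f ℓ).card) else 0))
        = ∑ f : Fin t → Finset (Fin 3),
            (if (∀ ℓ, locC (f ℓ)) then (X : Polynomial ℤ) ^ (∑ ℓ, (f ℓ).card) else 0) := by
      refine Finset.sum_congr rfl fun f _ => ?_
      rw [show ((if false then 1 else 0) + ∑ ℓ, (f ℓ).card) = ∑ ℓ, (f ℓ).card from by simp]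
      exact if_congr (by simp) rfl rfl
    rw [h3, key locC, enumC]
    rw [show (X + X^2 : Polynomial ℤ) = X * (1 + X) from by ring, mul_pow]
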